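/- Let N be a smooth 1-dimensional manifold without boundary and let γ = (γ₁, γ₂) : N → ℝ² be a smooth immersion satisfying condition (∗). Then for any nonempty open set U₁ × U₂ of N × N there exists (q₁, q₂) ∈ U₁ × U₂ such that both det [ γ′(q₁) , γ(q₂) − γ(q₁) ] ≠ 0 and det [ γ′(q₂) , γ(q₂) − γ(q₁) ] ≠ 0, where γ′(qᵢ) denotes the derivative of γ in a local coordinate around qᵢ and det [u, v] = u₁v₂ − u₂v₁ for u, v ∈ ℝ². -/

import Mathlib

open Manifold

noncomputable section

abbrev E2 := EuclideanSpace ℝ (Fin 2)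
abbrev E1 := EuclideanSpace ℝ (Fin 1)

/-- The distance-squared mapping `D_p : ℝ² → ℝ²` associated to `p = (p₁, p₂)`. -/
def Dp (p₁ p₂ : E2) (x : E2) : E2 :=
  (EuclideanSpace.equiv (Fin 2) ℝ).symm ![‖x - p₁‖ ^ 2, ‖x - p₂‖ ^ 2]

variable {N : Type*} [TopologicalSpace N] [ChartedSpace E1 N]
  [IsManifold (𝓡 1) (⊤ : ℕ∞) N]

/-- The local-coordinate representative of `γ` around `q`, using the preferred chart. -/
def gammaLocal (γ : N → E2) (q : N) : ℝ → E2 :=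
  fun t => γ ((extChartAt (𝓡 1) q).symm (EuclideanSpace.single 0 t))

/-- The local coordinate of the point `q` itself. -/
def coord (q : N) : ℝ := extChartAt (𝓡 1) q q 0

/-- The curvature of `γ` at `q`, computed in the preferred local coordinate around `q`:
`κ(q) = (γ₁′γ₂″ − γ₂′γ₁″) / ((γ₁′)² + (γ₂′)²)^{3/2}`. -/
def curvatureAt (γ : N → E2) (q : N) : ℝ :=
  (deriv (gammaLocal γ q) (coord q) 0 * deriv (deriv (gammaLocal γ q)) (coord q) 1 -
   deriv (gammaLocal γ q) (coord q) 1 * deriv (deriv (gammaLocal γ q)) (coord q) 0) /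
  ((deriv (gammaLocal γ q) (coord q) 0 ^ 2 + deriv (gammaLocal γ q) (coord q) 1 ^ 2) ^ ((3:ℝ)/2))

/-- Condition (∗): on every nonempty open subset of `N` there is a point of nonzero curvature. -/
def SatisfiesStar (γ : N → E2) : Prop :=
  ∀ U : Set N, IsOpen U → U.Nonempty → ∃ q ∈ U, curvatureAt γ q ≠ 0

/-- `det [u, v] = u₁v₂ − u₂v₁` for `u, v ∈ ℝ²`. -/
def det2 (u v : E2) : ℝ := u 0 * v 1 - u 1 * v 0


-- ===== auxiliary lemmas =====
section Aux
open Topology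

set_option linter.unusedSectionVars false

lemma E1_eq (v : E1) : v = EuclideanSpace.single 0 (v 0) := by
  ext i; fin_cases i; simp

lemma E1_smul (v : E1) : v = v 0 • EuclideanSpace.single (0 : Fin 1) (1:ℝ) := by
  ext i; fin_cases i; simp

lemma single_smul (t : ℝ) :
    EuclideanSpace.single (0 : Fin 1) t = t • EuclideanSpace.single (0 : Fin 1) (1:ℝ) := by
  ext i; fin_cases i; simp

variable {N : Type*} [TopologicalSpace N] [ChartedSpace E1 N]
  [IsManifold (𝓡 1) (⊤ : ℕ∞) N]

/-- the linear map `t ↦ single 0 t` -/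
def ι : ℝ →L[ℝ] E1 := (ContinuousLinearMap.id ℝ ℝ).smulRight (EuclideanSpace.single 0 1)

lemma ι_apply (t : ℝ) : ι t = EuclideanSpace.single (0:Fin 1) t := by
  simp [ι, ContinuousLinearMap.smulRight_apply]
  exact (single_smul t).symm

lemma ι_coord (q : N) : ι (coord q) = extChartAt (𝓡 1) q q := by
  rw [ι_apply, coord]
  exact (E1_eq _).symm

lemma deriv_gammaLocal (γ : N → E2) (q : N)
    (hγ : MDifferentiableAt (𝓡 1) 𝓘(ℝ, E2) γ q) :
    deriv (gammaLocal γ q) (coord q)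
      = mfderiv (𝓡 1) 𝓘(ℝ, E2) γ q (EuclideanSpace.single 0 (1:ℝ)) := by
  set G : E1 → E2 := γ ∘ (extChartAt (𝓡 1) q).symm with hGdef
  have hwr : writtenInExtChartAt (𝓡 1) 𝓘(ℝ, E2) q γ = G := by
    simp [writtenInExtChartAt, extChartAt_model_space_eq_id, hGdef, chartAt_self_eq]
  have hdiff : DifferentiableAt ℝ G (extChartAt (𝓡 1) q q) := by
    have := ((mdifferentiableAt_iff γ q).1 hγ).2
    rw [hwr] at this
    simpa [differentiableWithinAt_univ] using this
  have hmf : mfderiv (𝓡 1) 𝓘(ℝ, E2) γ q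
      = fderiv ℝ G (extChartAt (𝓡 1) q q) := by
    rw [hγ.mfderiv, hwr]
    simp [fderivWithin_univ]
    rfl
  have hcomp : gammaLocal γ q = G ∘ ι := by
    funext t
    simp [gammaLocal, hGdef, ι_apply, Function.comp]
  have hF : HasFDerivAt (G ∘ ι)
      ((fderiv ℝ G (extChartAt (𝓡 1) q q)).comp ι) (coord q) := by
    have hG : HasFDerivAt G (fderiv ℝ G (extChartAt (𝓡 1) q q)) (ι (coord q)) := by
      rw [ι_coord]; exact hdiff.hasFDerivAt
    exact hG.comp (coord q) ι.hasFDerivAt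
  rw [hcomp, hF.hasDerivAt.deriv, hmf]
  simp only [ContinuousLinearMap.comp_apply, ι_apply]
  rfl

/-- The base curve through the chart at `q`. -/
def hq (q : N) : ℝ → N := fun t => (extChartAt (𝓡 1) q).symm (EuclideanSpace.single 0 t)

lemma gammaLocal_eq_comp (γ : N → E2) (q : N) : gammaLocal γ q = γ ∘ hq q := rfl

lemma hq_coord (q : N) : hq q (coord q) = q := by
  have : EuclideanSpace.single (0:Fin 1) (coord q) = extChartAt (𝓡 1) q q := by
    rw [coord]; exact (E1_eq _).symm
  rw [hq, this]
  exact (extChartAt (𝓡 1) q).left_inv (mem_extChartAt_source q)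

lemma hq_mdiff (q : N) {t : ℝ}
    (ht : EuclideanSpace.single (0:Fin 1) t ∈ (extChartAt (𝓡 1) q).target) :
    MDifferentiableAt 𝓘(ℝ, ℝ) (𝓡 1) (hq q) t := by
  have hcomp : hq q = (extChartAt (𝓡 1) q).symm ∘ ι := by
    funext s; simp [hq, ι_apply, Function.comp]
  have hι : MDifferentiableAt 𝓘(ℝ, ℝ) 𝓘(ℝ, E1) (⇑ι) t := by
    have : ContMDiff 𝓘(ℝ, ℝ) 𝓘(ℝ, E1) ⊤ (⇑ι) := contMDiff_iff_contDiff.2 ι.contDiff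
    exact this.mdifferentiableAt (by simp)
  have hsymm : MDifferentiableAt 𝓘(ℝ, E1) (𝓡 1) (extChartAt (𝓡 1) q).symm (ι t) := by
    have h1 : ContMDiffWithinAt 𝓘(ℝ, E1) (𝓡 1) (⊤ : ℕ∞) (extChartAt (𝓡 1) q).symm
        (extChartAt (𝓡 1) q).target (ι t) := by
      rw [ι_apply]; exact contMDiffOn_extChartAt_symm q _ ht
    have h2 : (extChartAt (𝓡 1) q).target ∈ nhds (ι t) := by
      rw [ι_apply]; exact (isOpen_extChartAt_target q).mem_nhds ht
    exact ((h1.contMDiffAt h2).mdifferentiableAt (by simp))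
  rw [hcomp]
  exact hsymm.comp t hι

lemma deriv_gammaLocal_at (γ : N → E2)
    (hsmooth : ContMDiff (𝓡 1) 𝓘(ℝ, E2) (⊤ : ℕ∞) γ) (q : N) {t : ℝ}
    (ht : EuclideanSpace.single (0:Fin 1) t ∈ (extChartAt (𝓡 1) q).target) :
    ∃ a : ℝ, deriv (gammaLocal γ q) t
      = a • deriv (gammaLocal γ (hq q t)) (coord (hq q t)) := by
  set s := hq q t with hs
  have hhd := hq_mdiff q ht
  have hγd : MDifferentiableAt (𝓡 1) 𝓘(ℝ, E2) γ s := hsmooth.mdifferentiableAt (by simp)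
  have hcomp :
      mfderiv 𝓘(ℝ, ℝ) 𝓘(ℝ, E2) (γ ∘ hq q) t
        = (mfderiv (𝓡 1) 𝓘(ℝ, E2) γ s).comp (mfderiv 𝓘(ℝ, ℝ) (𝓡 1) (hq q) t) :=
    mfderiv_comp t hγd hhd
  set w : E1 := mfderiv 𝓘(ℝ, ℝ) (𝓡 1) (hq q) t (show TangentSpace 𝓘(ℝ,ℝ) t from (1:ℝ)) with hw
  refine ⟨w 0, ?_⟩
  have hderiv : deriv (gammaLocal γ q) t
      = mfderiv 𝓘(ℝ, ℝ) 𝓘(ℝ, E2) (γ ∘ hq q) t (show TangentSpace 𝓘(ℝ,ℝ) t from (1:ℝ)) := by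
    rw [gammaLocal_eq_comp, mfderiv_eq_fderiv, ← fderiv_apply_one_eq_deriv]
    rfl
  rw [hderiv, hcomp, deriv_gammaLocal γ s hγd]
  show mfderiv (𝓡 1) 𝓘(ℝ, E2) γ s w = w 0 • mfderiv (𝓡 1) 𝓘(ℝ, E2) γ s (EuclideanSpace.single 0 1)
  exact (congrArg (mfderiv (𝓡 1) 𝓘(ℝ, E2) γ s) (E1_smul w)).trans (ContinuousLinearMap.map_smul _ _ _)

lemma det2_smul (a : ℝ) (u v : E2) : det2 (a • u) v = a * det2 u v := by
  simp [det2, PiLp.smul_apply, smul_eq_mul]; ring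

lemma gammaLocal_contDiffAt (γ : N → E2)
    (hsmooth : ContMDiff (𝓡 1) 𝓘(ℝ, E2) (⊤ : ℕ∞) γ) (q : N) :
    ContDiffAt ℝ 3 (gammaLocal γ q) (coord q) := by
  have hG : ContDiffOn ℝ ((⊤:ℕ∞) : WithTop ℕ∞) (γ ∘ (extChartAt (𝓡 1) q).symm)
      (extChartAt (𝓡 1) q).target :=
    (hsmooth.comp_contMDiffOn (contMDiffOn_extChartAt_symm q)).contDiffOn
  have hGat : ContDiffAt ℝ ((⊤:ℕ∞) : WithTop ℕ∞) (γ ∘ (extChartAt (𝓡 1) q).symm) (ι (coord q)) := by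
    rw [ι_coord]
    exact hG.contDiffAt ((isOpen_extChartAt_target q).mem_nhds (mem_extChartAt_target q))
  have hcomp : gammaLocal γ q = (γ ∘ (extChartAt (𝓡 1) q).symm) ∘ ι := by
    funext t; simp [gammaLocal, ι_apply, Function.comp]
  rw [hcomp]
  exact (hGat.comp (coord q) (ι.contDiff.contDiffAt)).of_le (by norm_cast)

lemma E2_comp_ne (v : E2) (hv : v ≠ 0) : v 0 ≠ 0 ∨ v 1 ≠ 0 := by
  by_contra h
  push_neg at h
  exact hv (by ext i; fin_cases i <;> simp [h.1, h.2])

lemma det2_algebra (u a v : E2) (hv : v ≠ 0)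
    (d1 : det2 u v = 0) (d2 : det2 a v = 0) : det2 u a = 0 := by
  unfold det2 at *
  rcases E2_comp_ne v hv with h | h
  · have key : (u 0 * a 1 - u 1 * a 0) * v 0 = 0 := by linear_combination a 0 * d1 - u 0 * d2
    exact (mul_eq_zero.1 key).resolve_right h
  · have key : (u 0 * a 1 - u 1 * a 0) * v 1 = 0 := by linear_combination a 1 * d1 - u 1 * d2
    exact (mul_eq_zero.1 key).resolve_right h

lemma exists_det2_ne (γ : N → E2)
    (hsmooth : ContMDiff (𝓡 1) 𝓘(ℝ, E2) (⊤ : ℕ∞) γ)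
    (himm : ∀ q : N, Function.Injective (mfderiv (𝓡 1) 𝓘(ℝ, E2) γ q))
    (hstar : SatisfiesStar γ)
    (W : Set N) (hW : IsOpen W) (hne : W.Nonempty) (c : E2) :
    ∃ q ∈ W, det2 (deriv (gammaLocal γ q) (coord q)) (γ q - c) ≠ 0 := by
  by_contra hcon
  push_neg at hcon
  have hγc : Continuous γ := hsmooth.continuous
  set W' : Set N := W ∩ γ ⁻¹' {c}ᶜ with hW'def
  have hW'open : IsOpen W' := hW.inter (isOpen_compl_singleton.preimage hγc)
  have hW'ne : W'.Nonempty := by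
    by_contra hem
    rw [Set.not_nonempty_iff_eq_empty] at hem
    obtain ⟨q₀, hq₀⟩ := hne
    have hconst : γ =ᶠ[nhds q₀] (fun _ => c) := by
      filter_upwards [hW.mem_nhds hq₀] with x hx
      by_contra hxc
      have : x ∈ W' := ⟨hx, hxc⟩
      simp [hem] at this
    have h0 : mfderiv (𝓡 1) 𝓘(ℝ, E2) γ q₀ = 0 := by
      rw [hconst.mfderiv_eq, mfderiv_const]; rfl
    have h1 : EuclideanSpace.single (0:Fin 1) (1:ℝ) = (0 : E1) :=
      himm q₀ (by rw [h0]; rfl)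
    have := congrArg (fun v : E1 => v 0) h1
    simp at this
  obtain ⟨q, hqW', hκ⟩ := hstar W' hW'open hW'ne
  obtain ⟨hqW, hqc'⟩ := hqW'
  have hqc : γ q ≠ c := hqc'
  set g := gammaLocal γ q with hg
  set t₀ := coord q with ht₀
  -- neighborhood facts
  have hT₁ : {t : ℝ | EuclideanSpace.single (0:Fin 1) t ∈ (extChartAt (𝓡 1) q).target}
      ∈ nhds t₀ := by
    have hset : {t : ℝ | EuclideanSpace.single (0:Fin 1) t ∈ (extChartAt (𝓡 1) q).target}
        = ι ⁻¹' (extChartAt (𝓡 1) q).target := by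
      ext t; simp [ι_apply]
    rw [hset]
    have : IsOpen (ι ⁻¹' (extChartAt (𝓡 1) q).target) :=
      (isOpen_extChartAt_target q).preimage ι.continuous
    refine this.mem_nhds ?_
    have hmem : ι t₀ ∈ (extChartAt (𝓡 1) q).target := by
      rw [ht₀, ι_coord]; exact mem_extChartAt_target q
    exact hmem
  have hT₂ : hq q ⁻¹' W ∈ nhds t₀ := by
    have hca : ContinuousAt (hq q) t₀ := by
      have hcomp : hq q = (extChartAt (𝓡 1) q).symm ∘ ι := by
        funext s; simp [hq, ι_apply, Function.comp]
      rw [hcomp]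
      refine ContinuousAt.comp ?_ ι.continuous.continuousAt
      rw [ht₀, ι_coord]
      exact continuousAt_extChartAt_symm q
    refine hca.preimage_mem_nhds ?_
    rw [show hq q t₀ = q from hq_coord q] at *
    exact hW.mem_nhds hqW
  -- the local function f vanishes near t₀
  set f : ℝ → ℝ := fun t => det2 (deriv g t) (g t - c) with hf
  have hfev : f =ᶠ[nhds t₀] (fun _ => (0:ℝ)) := by
    filter_upwards [hT₁, hT₂] with t h1 h2
    obtain ⟨a, ha⟩ := deriv_gammaLocal_at γ hsmooth q h1
    have hgt : g t - c = γ (hq q t) - c := rfl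
    show det2 (deriv g t) (g t - c) = 0
    rw [hg] at *
    rw [ha, hgt, det2_smul, hcon (hq q t) h2, mul_zero]
  -- differentiability facts
  obtain ⟨u, hu, hcd⟩ := (gammaLocal_contDiffAt γ hsmooth q).contDiffOn (le_refl _) (by simp)
  obtain ⟨v, hvu, hvop, ht₀v⟩ := mem_nhds_iff.1 hu
  have hcdv : ContDiffOn ℝ 3 g v := hcd.mono hvu
  have hder2 : ContDiffOn ℝ 2 (deriv g) v := hcdv.deriv_of_isOpen hvop (by norm_num)
  have hmemv : v ∈ nhds t₀ := hvop.mem_nhds ht₀v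
  have hdg : DifferentiableAt ℝ (deriv g) t₀ :=
    ((hder2.differentiableOn (by norm_num)).differentiableAt hmemv)
  have hgd : DifferentiableAt ℝ g t₀ :=
    ((hcdv.differentiableOn (by norm_num)).differentiableAt hmemv)
  -- component HasDerivAt
  have hg0 : HasDerivAt (fun t => g t 0) (deriv g t₀ 0) t₀ := by
    exact
      ((EuclideanSpace.proj (0:Fin 2)).hasFDerivAt.comp_hasDerivAt t₀ hgd.hasDerivAt)
  have hg1 : HasDerivAt (fun t => g t 1) (deriv g t₀ 1) t₀ := by
    exact
      ((EuclideanSpace.proj (1:Fin 2)).hasFDerivAt.comp_hasDerivAt t₀ hgd.hasDerivAt)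
  have hd0 : HasDerivAt (fun t => deriv g t 0) (deriv (deriv g) t₀ 0) t₀ := by
    exact
      ((EuclideanSpace.proj (0:Fin 2)).hasFDerivAt.comp_hasDerivAt t₀ hdg.hasDerivAt)
  have hd1 : HasDerivAt (fun t => deriv g t 1) (deriv (deriv g) t₀ 1) t₀ := by
    exact
      ((EuclideanSpace.proj (1:Fin 2)).hasFDerivAt.comp_hasDerivAt t₀ hdg.hasDerivAt)
  have hfd : HasDerivAt f
      ((deriv (deriv g) t₀ 0 * (g t₀ 1 - c 1) + deriv g t₀ 0 * deriv g t₀ 1)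
        - (deriv (deriv g) t₀ 1 * (g t₀ 0 - c 0) + deriv g t₀ 1 * deriv g t₀ 0)) t₀ := by
    have e1 : HasDerivAt (fun t => g t 1 - c 1) (deriv g t₀ 1) t₀ := hg1.sub_const (c 1)
    have e0 : HasDerivAt (fun t => g t 0 - c 0) (deriv g t₀ 0) t₀ := hg0.sub_const (c 0)
    have m1 := hd0.mul e1
    have m0 := hd1.mul e0
    have := m1.sub m0
    convert this using 2 <;> try rfl
  have hderiv_f : deriv f t₀ = 0 := by
    rw [hfev.deriv_eq]
    simp
  have hD0 := hfd.deriv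
  rw [hderiv_f] at hD0
  -- conclude both det2 conditions at t₀
  have hgval : g t₀ = γ q := by
    rw [hg, gammaLocal_eq_comp]
    show γ (hq q t₀) = γ q
    rw [ht₀, hq_coord]
  have d2 : det2 (deriv (deriv g) t₀) (γ q - c) = 0 := by
    have hsub0 : (γ q - c) 0 = γ q 0 - c 0 := rfl
    have hsub1 : (γ q - c) 1 = γ q 1 - c 1 := rfl
    unfold det2
    rw [hsub0, hsub1, ← hgval]
    linarith [hD0]
  have d1 : det2 (deriv g t₀) (γ q - c) = 0 := hcon q hqW
  have hvne : γ q - c ≠ 0 := sub_ne_zero.2 hqc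
  have hnum : det2 (deriv g t₀) (deriv (deriv g) t₀) = 0 :=
    det2_algebra _ _ _ hvne d1 d2
  apply hκ
  have hcurv : curvatureAt γ q
      = det2 (deriv g t₀) (deriv (deriv g) t₀)
        / ((deriv g t₀ 0 ^ 2 + deriv g t₀ 1 ^ 2) ^ ((3:ℝ)/2)) := rfl
  rw [hcurv, hnum, zero_div]

lemma det2_sub_swap (u a b : E2) : det2 u (a - b) = - det2 u (b - a) := by
  have h0 : ∀ x y : E2, ∀ i, (x - y) i = x i - y i := fun _ _ _ => rfl
  unfold det2
  rw [h0, h0, h0, h0]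
  ring

end Aux

theorem stmt9 (γ : N → E2)
    (hsmooth : ContMDiff (𝓡 1) 𝓘(ℝ, E2) (⊤ : ℕ∞) γ)
    (himm : ∀ q : N, Function.Injective (mfderiv (𝓡 1) 𝓘(ℝ, E2) γ q))
    (hstar : SatisfiesStar γ)
    (U₁ U₂ : Set N) (hU₁ : IsOpen U₁) (hU₂ : IsOpen U₂)
    (hne₁ : U₁.Nonempty) (hne₂ : U₂.Nonempty) :
    ∃ q₁ ∈ U₁, ∃ q₂ ∈ U₂,
      det2 (deriv (gammaLocal γ q₁) (coord q₁)) (γ q₂ - γ q₁) ≠ 0 ∧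
      det2 (deriv (gammaLocal γ q₂) (coord q₂)) (γ q₂ - γ q₁) ≠ 0 := by
  obtain ⟨p₁, hp₁⟩ := hne₁
  obtain ⟨q₂, hq₂U, hq₂⟩ := exists_det2_ne γ hsmooth himm hstar U₂ hU₂ hne₂ (γ p₁)
  -- open set of good q₁'s
  set v := deriv (gammaLocal γ q₂) (coord q₂) with hv
  have hcont : Continuous fun x : E2 => det2 v (γ q₂ - x) := by
    have h0 : Continuous fun x : E2 => (γ q₂ - x) 0 :=
      (EuclideanSpace.proj (0:Fin 2)).continuous.comp (continuous_const.sub continuous_id)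
    have h1 : Continuous fun x : E2 => (γ q₂ - x) 1 :=
      (EuclideanSpace.proj (1:Fin 2)).continuous.comp (continuous_const.sub continuous_id)
    exact ((continuous_const.mul h1).sub (continuous_const.mul h0))
  have hγc : Continuous γ := hsmooth.continuous
  set V₁ : Set N := U₁ ∩ (fun q => det2 v (γ q₂ - γ q)) ⁻¹' {0}ᶜ with hV₁
  have hV₁open : IsOpen V₁ :=
    hU₁.inter (isOpen_compl_singleton.preimage (hcont.comp hγc))
  have hp₁V : p₁ ∈ V₁ := by
    refine ⟨hp₁, ?_⟩
    simp only [Set.mem_preimage, Set.mem_compl_iff, Set.mem_singleton_iff]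
    exact hq₂
  obtain ⟨q₁, hq₁V, hq₁⟩ := exists_det2_ne γ hsmooth himm hstar V₁ hV₁open ⟨p₁, hp₁V⟩ (γ q₂)
  refine ⟨q₁, hq₁V.1, q₂, hq₂U, ?_, ?_⟩
  · rw [det2_sub_swap]
    simpa using hq₁
  · have := hq₁V.2
    simp only [Set.mem_preimage, Set.mem_compl_iff, Set.mem_singleton_iff] at this
    exact this
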